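/- Let T be a tree with nonsingular s×s matrix edge weights, L its Laplacian, and L_v the principal submatrix obtained by deleting the row and column blocks of a vertex v. Then L_v is invertible and for vertices u, w ≠ v, the (u,w) block of L_v⁻¹ equals the sum of W(e)⁻¹ over all edges e lying on both the path from u to v and the path from w to v. -/

import Mathlib

open scoped Classical
open Matrix

/-- The block Laplacian matrix of a graph whose edges carry `d × d` real matrix weights. -/
noncomputable def lap {V : Type*} [Fintype V] (G : SimpleGraph V) (d : ℕ)
    (W : Sym2 V → Matrix (Fin d) (Fin d) ℝ) :
    Matrix (V × Fin d) (V × Fin d) ℝ :=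
  Matrix.of fun p q =>
    if p.1 = q.1 then (∑ x ∈ G.neighborFinset p.1, W s(p.1, x)) p.2 q.2
    else if G.Adj p.1 q.1 then -(W s(p.1, q.1)) p.2 q.2 else 0

/-- The unique path in a tree between two vertices. -/
noncomputable def pathWalk {V : Type*} {G : SimpleGraph V} (hT : G.IsTree) (u v : V) :
    G.Walk u v := (hT.existsUnique_path u v).choose

/-- The list of edges of the unique path between two vertices of a tree. -/
noncomputable def pathEdges {V : Type*} {G : SimpleGraph V} (hT : G.IsTree) (u v : V) :
    List (Sym2 V) := (pathWalk hT u v).edges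

namespace TreeLapAux

open SimpleGraph

variable {V : Type*} [DecidableEq V] {G : SimpleGraph V} (hT : G.IsTree)

lemma pathWalk_isPath (u v : V) : (pathWalk hT u v).IsPath :=
  (hT.existsUnique_path u v).choose_spec.1

lemma pathWalk_unique {u v : V} (p : G.Walk u v) (hp : p.IsPath) : p = pathWalk hT u v :=
  (hT.existsUnique_path u v).choose_spec.2 p hp

lemma pathEdges_def (u v : V) : pathEdges hT u v = (pathWalk hT u v).edges := rfl

lemma pathWalk_self (v : V) : pathWalk hT v v = SimpleGraph.Walk.nil :=
  (pathWalk_unique hT _ Walk.IsPath.nil).symm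

lemma pathEdges_self (v : V) : pathEdges hT v v = [] := by
  rw [pathEdges_def, pathWalk_self]
  rfl

lemma pathEdges_nodup (u v : V) : (pathEdges hT u v).Nodup :=
  Walk.edges_nodup_of_support_nodup (pathWalk_isPath hT u v).support_nodup

lemma exists_step {u v : V} (huv : u ≠ v) :
    ∃ (t : V) (h : G.Adj u t), pathWalk hT u v = Walk.cons h (pathWalk hT t v) := by
  obtain ⟨t, h, p', hp'⟩ := Walk.exists_eq_cons_of_ne huv (pathWalk hT u v)
  have hpath := pathWalk_isPath hT u v
  rw [hp'] at hpath
  refine ⟨t, h, ?_⟩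
  rw [hp', pathWalk_unique hT p' hpath.of_cons]

/-- In the "toward" case, the edge `s(u,x)` lies on the path from `u` to `v` and
the path from `u` decomposes. -/
lemma pathEdges_toward {u v x : V} (huv : u ≠ v) (hx : G.Adj u x)
    (he : s(u, x) ∈ pathEdges hT u v) :
    pathEdges hT u v = s(u, x) :: pathEdges hT x v := by
  obtain ⟨t, ht, hspec⟩ := exists_step hT huv
  have hpath := pathWalk_isPath hT u v
  rw [hspec] at hpath
  have hxt : x = t := by
    rw [pathEdges_def, hspec, Walk.edges_cons, List.mem_cons] at he
    rcases he with he | he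
    · exact Sym2.congr_right.mp he
    · exact absurd (Walk.fst_mem_support_of_mem_edges _ he)
        ((Walk.cons_isPath_iff _ _).mp hpath).2
  subst hxt
  rw [pathEdges_def, hspec, Walk.edges_cons, ← pathEdges_def]

lemma pathEdges_away {u v x : V} (huv : u ≠ v) (hx : G.Adj u x)
    (he : s(u, x) ∉ pathEdges hT u v) :
    pathEdges hT x v = s(u, x) :: pathEdges hT u v := by
  obtain ⟨t, ht, hspec⟩ := exists_step hT huv
  have hpath := pathWalk_isPath hT u v
  rw [hspec] at hpath
  have hxt : x ≠ t := by
    rintro rfl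
    exact he (by rw [pathEdges_def, hspec, Walk.edges_cons]; exact List.mem_cons_self)
  -- show x is not on the path from u to v
  have hxsupp : x ∉ (pathWalk hT u v).support := by
    intro hmem
    rw [hspec, Walk.support_cons, List.mem_cons] at hmem
    rcases hmem with hmem | hmem
    · exact hx.ne hmem.symm
    · -- x on the path from t to v: derive x = t via path uniqueness
      have htk : ((pathWalk hT t v).takeUntil x hmem).IsPath :=
        (pathWalk_isPath hT t v).takeUntil hmem
      have hu_not : u ∉ ((pathWalk hT t v).takeUntil x hmem).support := fun hmem' =>
        ((Walk.cons_isPath_iff _ _).mp hpath).2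
          (Walk.support_takeUntil_subset _ hmem hmem')
      have hc : (Walk.cons ht ((pathWalk hT t v).takeUntil x hmem)).IsPath :=
        htk.cons hu_not
      have hs : (Walk.cons hx Walk.nil : G.Walk u x).IsPath := by
        simp [Walk.cons_isPath_iff, hx.ne]
      have := (pathWalk_unique hT _ hc).trans (pathWalk_unique hT _ hs).symm
      -- compare second vertices
      have hsupp := congrArg Walk.support this
      rw [Walk.support_cons, Walk.support_cons,
        Walk.support_eq_cons ((pathWalk hT t v).takeUntil x hmem),
        Walk.support_eq_cons (Walk.nil : G.Walk x x)] at hsupp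
      simp only [List.cons.injEq] at hsupp
      exact hxt hsupp.2.1.symm
  have hc : (Walk.cons hx.symm (pathWalk hT u v)).IsPath :=
    (pathWalk_isPath hT u v).cons hxsupp
  have : pathWalk hT x v = Walk.cons hx.symm (pathWalk hT u v) :=
    (pathWalk_unique hT _ hc).symm
  rw [pathEdges_def, this, Walk.edges_cons, ← pathEdges_def, Sym2.eq_swap]

end TreeLapAux
namespace TreeLapAux

open SimpleGraph

variable {V : Type*} [DecidableEq V] {G : SimpleGraph V} (hT : G.IsTree)

/-- The block of the claimed inverse. -/
noncomputable def Nmat {d : ℕ} (hT : G.IsTree) (W : Sym2 V → Matrix (Fin d) (Fin d) ℝ)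
    (v a b : V) : Matrix (Fin d) (Fin d) ℝ :=
  ∑ e ∈ (pathEdges hT a v).toFinset ∩ (pathEdges hT b v).toFinset, (W e)⁻¹

lemma Nmat_self_left {d : ℕ} (W : Sym2 V → Matrix (Fin d) (Fin d) ℝ) (v b : V) :
    Nmat hT W v v b = 0 := by
  rw [Nmat, pathEdges_self]
  simp

/-- Per-neighbor computation. -/
lemma per_neighbor {d : ℕ} (W : Sym2 V → Matrix (Fin d) (Fin d) ℝ)
    (hW : ∀ e ∈ G.edgeSet, IsUnit (W e)) {u v x : V} (huv : u ≠ v) (hx : G.Adj u x) (z : V) :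
    W (s(u, x)) * (Nmat hT W v u z - Nmat hT W v x z) =
      ((if s(u, x) ∈ pathEdges hT u v then (1 : ℝ) else -1) *
        (if s(u, x) ∈ pathEdges hT z v then (1 : ℝ) else 0)) •
        (1 : Matrix (Fin d) (Fin d) ℝ) := by
  have hunit : W (s(u, x)) * (W (s(u, x)))⁻¹ = 1 :=
    Matrix.mul_nonsing_inv _ ((Matrix.isUnit_iff_isUnit_det _).mp (hW _ (G.mem_edgeSet.mpr hx)))
  by_cases he : s(u, x) ∈ pathEdges hT u v
  · have hcons := pathEdges_toward hT huv hx he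
    have hnotin : s(u, x) ∉ (pathEdges hT x v).toFinset := by
      have hnd := pathEdges_nodup hT u v
      rw [hcons, List.nodup_cons] at hnd
      simpa using hnd.1
    have hdiff : Nmat hT W v u z - Nmat hT W v x z =
        if s(u, x) ∈ (pathEdges hT z v).toFinset
          then (W (s(u, x)))⁻¹ else 0 := by
      rw [Nmat, Nmat, hcons, List.toFinset_cons]
      by_cases hez : s(u, x) ∈ (pathEdges hT z v).toFinset
      · rw [if_pos hez, Finset.insert_inter_of_mem hez,
          Finset.sum_insert (fun hmem => hnotin (Finset.mem_of_mem_inter_left hmem))]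
        abel
      · rw [if_neg hez, Finset.insert_inter_of_notMem hez, sub_self]
    rw [hdiff, if_pos he]
    by_cases hez : s(u, x) ∈ pathEdges hT z v
    · rw [if_pos (List.mem_toFinset.mpr hez), if_pos hez, hunit, one_mul, one_smul]
    · rw [if_neg (fun hmem => hez (List.mem_toFinset.mp hmem)), if_neg hez, mul_zero,
        mul_zero, zero_smul]
  · have hcons := pathEdges_away hT huv hx he
    have hnotin : s(u, x) ∉ (pathEdges hT u v).toFinset := by simpa using he
    have hdiff : Nmat hT W v x z - Nmat hT W v u z =
        if s(u, x) ∈ (pathEdges hT z v).toFinset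
          then (W (s(u, x)))⁻¹ else 0 := by
      rw [Nmat, Nmat, hcons, List.toFinset_cons]
      by_cases hez : s(u, x) ∈ (pathEdges hT z v).toFinset
      · rw [if_pos hez, Finset.insert_inter_of_mem hez,
          Finset.sum_insert (fun hmem => hnotin (Finset.mem_of_mem_inter_left hmem))]
        abel
      · rw [if_neg hez, Finset.insert_inter_of_notMem hez, sub_self]
    have hdiff' : Nmat hT W v u z - Nmat hT W v x z =
        -(if s(u, x) ∈ (pathEdges hT z v).toFinset
          then (W (s(u, x)))⁻¹ else 0) := by
      rw [← hdiff]; abel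
    rw [hdiff', if_neg he]
    by_cases hez : s(u, x) ∈ pathEdges hT z v
    · rw [if_pos (List.mem_toFinset.mpr hez), if_pos hez, mul_neg, hunit]
      simp
    · rw [if_neg (fun hmem => hez (List.mem_toFinset.mp hmem)), if_neg hez]
      simp

/-- The key scalar identity, by induction along the path from `z` to `v`. -/
lemma key_sum [Fintype V] {v z : V} (q : G.Walk z v) (hq : q.IsPath) {u : V} (hu : u ≠ v) :
    ∑ x ∈ G.neighborFinset u,
      (if s(u, x) ∈ pathEdges hT u v then (1 : ℝ) else -1) *
        (if s(u, x) ∈ q.edges then (1 : ℝ) else 0) =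
      if u = z then 1 else 0 := by
  induction q with
  | nil =>
    rw [if_neg hu]
    exact Finset.sum_eq_zero (fun x _ => by simp)
  | @cons z b v h p ih =>
    have hp : p.IsPath := hq.of_cons
    have hzb : s(z, b) ∉ p.edges := by
      have hnd := Walk.edges_nodup_of_support_nodup hq.support_nodup
      rw [Walk.edges_cons, List.nodup_cons] at hnd
      exact hnd.1
    have hsplit : ∀ x : V, (if s(u, x) ∈ (Walk.cons h p).edges then (1 : ℝ) else 0) =
        (if s(u, x) = s(z, b) then (1 : ℝ) else 0) +
          (if s(u, x) ∈ p.edges then (1 : ℝ) else 0) := by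
      intro x
      rw [Walk.edges_cons]
      by_cases h1 : s(u, x) = s(z, b)
      · rw [if_pos h1, if_pos (h1 ▸ List.mem_cons_self), if_neg (h1 ▸ hzb), add_zero]
      · by_cases h2 : s(u, x) ∈ p.edges
        · rw [if_pos (List.mem_cons_of_mem _ h2), if_neg h1, if_pos h2, zero_add]
        · rw [if_neg h1, if_neg h2, add_zero, if_neg]
          rw [List.mem_cons]
          tauto
    have hsum := ih hp hu
    calc ∑ x ∈ G.neighborFinset u,
          (if s(u, x) ∈ pathEdges hT u v then (1 : ℝ) else -1) *
            (if s(u, x) ∈ (Walk.cons h p).edges then (1 : ℝ) else 0)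
        = (∑ x ∈ G.neighborFinset u,
            (if s(u, x) ∈ pathEdges hT u v then (1 : ℝ) else -1) *
              (if s(u, x) = s(z, b) then (1 : ℝ) else 0)) +
          ∑ x ∈ G.neighborFinset u,
            (if s(u, x) ∈ pathEdges hT u v then (1 : ℝ) else -1) *
              (if s(u, x) ∈ p.edges then (1 : ℝ) else 0) := by
          rw [← Finset.sum_add_distrib]
          exact Finset.sum_congr rfl fun x _ => by rw [hsplit x, mul_add]
      _ = if u = z then 1 else 0 := by
          rw [hsum]
          by_cases huz : u = z
          · subst huz
            have hub : u ≠ b := h.ne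
            have hfirst : ∀ x : V,
                (if s(u, x) ∈ pathEdges hT u v then (1 : ℝ) else -1) *
                  (if s(u, x) = s(u, b) then (1 : ℝ) else 0) =
                if x = b then
                  (if s(u, x) ∈ pathEdges hT u v then (1 : ℝ) else -1) else 0 := by
              intro x
              by_cases hxb : x = b
              · subst hxb
                simp
              · have hc1 : ¬(s(u, x) = s(u, b)) :=
                  fun hc => hxb (Sym2.congr_right.mp hc)
                rw [if_neg hc1, if_neg hxb, mul_zero]
            rw [Finset.sum_congr rfl fun x _ => hfirst x,
              Finset.sum_ite_eq' (G.neighborFinset u) b _,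
              if_pos ((G.mem_neighborFinset u b).mpr h)]
            have hmem : s(u, b) ∈ pathEdges hT u v := by
              rw [pathEdges_def, ← pathWalk_unique hT _ hq, Walk.edges_cons]
              exact List.mem_cons_self
            rw [if_pos hmem, if_neg hub, if_pos rfl, add_zero]
          · by_cases hub : u = b
            · subst hub
              have hfirst : ∀ x : V,
                  (if s(u, x) ∈ pathEdges hT u v then (1 : ℝ) else -1) *
                    (if s(u, x) = s(z, u) then (1 : ℝ) else 0) =
                  if x = z then
                    (if s(u, x) ∈ pathEdges hT u v then (1 : ℝ) else -1) else 0 := by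
                intro x
                by_cases hxz : x = z
                · subst hxz
                  rw [if_pos Sym2.eq_swap, if_pos rfl, mul_one]
                · have hc1 : ¬(s(u, x) = s(z, u)) :=
                    fun hc => hxz (Sym2.congr_right.mp (hc.trans Sym2.eq_swap))
                  rw [if_neg hc1, if_neg hxz, mul_zero]
              rw [Finset.sum_congr rfl fun x _ => hfirst x,
                Finset.sum_ite_eq' (G.neighborFinset u) z _,
                if_pos ((G.mem_neighborFinset u z).mpr h.symm)]
              have hmem : s(u, z) ∉ pathEdges hT u v := by
                rw [pathEdges_def, ← pathWalk_unique hT _ hp]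
                rw [Sym2.eq_swap]
                exact hzb
              rw [if_neg hmem, if_pos rfl, if_neg huz]
              ring
            · have hfirst : ∀ x : V,
                  (if s(u, x) ∈ pathEdges hT u v then (1 : ℝ) else -1) *
                    (if s(u, x) = s(z, b) then (1 : ℝ) else 0) = 0 := by
                intro x
                have hc1 : ¬(s(u, x) = s(z, b)) := by
                  intro hc
                  rcases Sym2.eq_iff.mp hc with ⟨h1, _⟩ | ⟨h1, _⟩
                  · exact huz h1
                  · exact hub h1
                rw [if_neg hc1, mul_zero]
              rw [Finset.sum_congr rfl fun x _ => hfirst x, Finset.sum_const_zero,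
                if_neg hub, if_neg huz, add_zero]

end TreeLapAux
namespace TreeLapAux

open SimpleGraph

variable {V : Type*} [DecidableEq V] {G : SimpleGraph V} (hT : G.IsTree)

lemma row_sum [Fintype V] {d : ℕ} (W : Sym2 V → Matrix (Fin d) (Fin d) ℝ)
    (hW : ∀ e ∈ G.edgeSet, IsUnit (W e)) {u v : V} (huv : u ≠ v) (z : V) :
    ∑ x ∈ G.neighborFinset u,
      W (s(u, x)) * (Nmat hT W v u z - Nmat hT W v x z) =
    (if u = z then (1 : ℝ) else 0) • (1 : Matrix (Fin d) (Fin d) ℝ) := by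
  have h1 : ∀ x ∈ G.neighborFinset u,
      W (s(u, x)) * (Nmat hT W v u z - Nmat hT W v x z) =
      ((if s(u, x) ∈ pathEdges hT u v then (1 : ℝ) else -1) *
        (if s(u, x) ∈ pathEdges hT z v then (1 : ℝ) else 0)) •
        (1 : Matrix (Fin d) (Fin d) ℝ) :=
    fun x hx => per_neighbor hT W hW huv ((G.mem_neighborFinset u x).mp hx) z
  rw [Finset.sum_congr rfl h1, ← Finset.sum_smul]
  congr 1
  exact key_sum hT (pathWalk hT z v) (pathWalk_isPath hT z v) huv

theorem main {V : Type*} [Fintype V] [DecidableEq V]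
    (G : SimpleGraph V) (hT : G.IsTree) (d : ℕ)
    (W : Sym2 V → Matrix (Fin d) (Fin d) ℝ)
    (hW : ∀ e ∈ G.edgeSet, IsUnit (W e)) (v : V) :
    IsUnit ((lap G d W).submatrix
        (fun p : {x : V // x ≠ v} × Fin d => ((p.1 : V), p.2))
        (fun p : {x : V // x ≠ v} × Fin d => ((p.1 : V), p.2))) ∧
      ∀ (u w : {x : V // x ≠ v}) (i j : Fin d),
        ((lap G d W).submatrix
          (fun p : {x : V // x ≠ v} × Fin d => ((p.1 : V), p.2))
          (fun p : {x : V // x ≠ v} × Fin d => ((p.1 : V), p.2)))⁻¹ (u, i) (w, j) =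
          (∑ e ∈ (pathEdges hT (u : V) v).toFinset ∩ (pathEdges hT (w : V) v).toFinset,
            (W e)⁻¹) i j := by
  set A := (lap G d W).submatrix
      (fun p : {x : V // x ≠ v} × Fin d => ((p.1 : V), p.2))
      (fun p : {x : V // x ≠ v} × Fin d => ((p.1 : V), p.2)) with hA
  set B : Matrix ({x : V // x ≠ v} × Fin d) ({x : V // x ≠ v} × Fin d) ℝ :=
      Matrix.of (fun p q => Nmat hT W v p.1.1 q.1.1 p.2 q.2) with hB
  have key : A * B = 1 := by
    ext ⟨u, i⟩ ⟨z, j⟩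
    rw [Matrix.mul_apply, Fintype.sum_prod_type]
    set F : V → Matrix (Fin d) (Fin d) ℝ := fun x =>
      (if x = (u : V) then
          (∑ y ∈ G.neighborFinset (u : V), W (s((u : V), y))) * Nmat hT W v x (z : V)
        else 0) +
      (if G.Adj (u : V) x then -(W (s((u : V), x)) * Nmat hT W v x (z : V)) else 0)
      with hF
    have C1 : ∀ w : {x : V // x ≠ v},
        (∑ k, A (u, i) (w, k) * B (w, k) (z, j)) = F (w : V) i j := by
      intro w
      by_cases h1 : (u : V) = (w : V)
      · have hadj : ¬ G.Adj (u : V) (w : V) := fun h => h.ne h1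
        have hterm : ∀ k, A (u, i) (w, k) * B (w, k) (z, j) =
            (∑ y ∈ G.neighborFinset (u : V), W (s((u : V), y))) i k *
              Nmat hT W v (w : V) (z : V) k j := by
          intro k
          rw [hA, hB]
          simp only [Matrix.submatrix_apply, lap, Matrix.of_apply]
          rw [if_pos h1]
        rw [Finset.sum_congr rfl fun k _ => hterm k, ← Matrix.mul_apply, hF]
        simp only []
        rw [if_pos h1.symm, if_neg hadj, add_zero]
      · by_cases h2 : G.Adj (u : V) (w : V)
        · have hterm : ∀ k, A (u, i) (w, k) * B (w, k) (z, j) =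
              -(W (s((u : V), (w : V))) i k * Nmat hT W v (w : V) (z : V) k j) := by
            intro k
            rw [hA, hB]
            simp only [Matrix.submatrix_apply, lap, Matrix.of_apply, Matrix.neg_apply]
            rw [if_neg h1, if_pos h2, neg_mul]
          rw [Finset.sum_congr rfl fun k _ => hterm k, Finset.sum_neg_distrib,
            ← Matrix.mul_apply, hF]
          simp only []
          rw [if_neg (fun h => h1 h.symm), if_pos h2, zero_add, Matrix.neg_apply]
        · have hterm : ∀ k, A (u, i) (w, k) * B (w, k) (z, j) = 0 := by
            intro k
            rw [hA, hB]
            simp only [Matrix.submatrix_apply, lap, Matrix.of_apply]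
            rw [if_neg h1, if_neg h2, zero_mul]
          rw [Finset.sum_congr rfl fun k _ => hterm k, Finset.sum_const_zero, hF]
          simp only []
          rw [if_neg (fun h => h1 h.symm), if_neg h2, add_zero, Matrix.zero_apply]
    rw [Finset.sum_congr rfl fun w _ => C1 w, ← Matrix.sum_apply]
    have hsub : (∑ w : {x : V // x ≠ v}, F (w : V)) = ∑ x, F x := by
      rw [← Finset.sum_subtype (Finset.univ.filter (fun x => x ≠ v)) (fun x => by simp) F]
      apply Finset.sum_filter_of_ne
      intro x _ hx hxv
      subst hxv
      apply hx
      have h1 : ¬ (x = (u : V)) := fun h => u.2 h.symm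
      simp [hF, h1, Nmat_self_left]
    have hsum2 : (∑ x, F x) = (if (u : V) = (z : V) then (1 : ℝ) else 0) •
        (1 : Matrix (Fin d) (Fin d) ℝ) := by
      rw [hF]
      rw [Finset.sum_add_distrib, Finset.sum_ite_eq' Finset.univ ((u : V)) _,
        if_pos (Finset.mem_univ _)]
      have hsecond : (∑ x, if G.Adj (u : V) x then
          -(W (s((u : V), x)) * Nmat hT W v x (z : V)) else 0) =
          ∑ x ∈ G.neighborFinset (u : V),
            -(W (s((u : V), x)) * Nmat hT W v x (z : V)) := by
        rw [neighborFinset_eq_filter, Finset.sum_filter]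
      rw [hsecond]
      have hD : (∑ y ∈ G.neighborFinset (u : V), W (s((u : V), y))) *
          Nmat hT W v (u : V) (z : V) =
          ∑ y ∈ G.neighborFinset (u : V),
            W (s((u : V), y)) * Nmat hT W v (u : V) (z : V) :=
        Finset.sum_mul _ _ _
      rw [hD, ← Finset.sum_add_distrib]
      have hcomb : ∀ x ∈ G.neighborFinset (u : V),
          W (s((u : V), x)) * Nmat hT W v (u : V) (z : V) +
            -(W (s((u : V), x)) * Nmat hT W v x (z : V)) =
          W (s((u : V), x)) *
            (Nmat hT W v (u : V) (z : V) - Nmat hT W v x (z : V)) := by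
        intro x _
        rw [mul_sub, sub_eq_add_neg]
      rw [Finset.sum_congr rfl hcomb]
      exact row_sum hT W hW u.2 (z : V)
    rw [hsub, hsum2]

    by_cases huz : u = z
    · subst huz
      simp [Matrix.one_apply, Prod.ext_iff]
    · have hcoe : ¬ ((u : V) = (z : V)) := fun h => huz (Subtype.ext h)
      simp [Matrix.one_apply, Prod.ext_iff, hcoe,
        fun h : u = z => huz h]
  have hdet : IsUnit A.det := by
    have h2 := congrArg Matrix.det key
    rw [Matrix.det_mul, Matrix.det_one] at h2
    exact IsUnit.of_mul_eq_one _ h2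
  refine ⟨(Matrix.isUnit_iff_isUnit_det A).mpr hdet, ?_⟩
  intro u w i j
  rw [Matrix.inv_eq_right_inv key]
  rfl

end TreeLapAux

/-- For a tree with nonsingular matrix edge weights, the principal submatrix `L_v` of the
Laplacian is invertible, and the `(u,w)` block of `L_v⁻¹` is the sum of `W(e)⁻¹` over the
edges `e` lying on both the path from `u` to `v` and the path from `w` to `v`. -/
theorem inv_lap_principal_submatrix {V : Type*} [Fintype V] [DecidableEq V]
    (G : SimpleGraph V) (hT : G.IsTree) (d : ℕ)
    (W : Sym2 V → Matrix (Fin d) (Fin d) ℝ)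
    (hW : ∀ e ∈ G.edgeSet, IsUnit (W e)) (v : V) :
    letI Lv : Matrix ({x : V // x ≠ v} × Fin d) ({x : V // x ≠ v} × Fin d) ℝ :=
      (lap G d W).submatrix
        (fun p : {x : V // x ≠ v} × Fin d => ((p.1 : V), p.2))
        (fun p : {x : V // x ≠ v} × Fin d => ((p.1 : V), p.2))
    IsUnit Lv ∧
      ∀ (u w : {x : V // x ≠ v}) (i j : Fin d),
        Lv⁻¹ (u, i) (w, j) =
          (∑ e ∈ (pathEdges hT (u : V) v).toFinset ∩ (pathEdges hT (w : V) v).toFinset,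
            (W e)⁻¹) i j := by
  exact TreeLapAux.main G hT d W hW v
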